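/- Let θ be an action of a discrete group G on a unital C*-algebra A, and embed A in the reduced crossed product A ⋊_r G. If a pure state f on A is equivalent to f∘θ_g for some g ≠ e, then f does not have a unique state extension to A ⋊_r G. -/
import Mathlib


/- Statement 3: let `θ` be an action of a discrete group `G` on a unital
C*-algebra `A`, and embed `A` in the reduced crossed product `A ⋊_r G`.  If a
pure state `f` on `A` is equivalent to `f ∘ θ_g` for some `g ≠ e`, then `f` does
not have a unique state extension to `A ⋊_r G`.  The reduced crossed product is
axiomatized as a unital C*-algebra `B` together with a unital embedding
`ι : A → B`, a unitary representation `T` of `G` in `B` implementing `θ`,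
generating `B`, and a faithful conditional expectation `E : B → A` annihilating
`ι(x) T_g` for `g ≠ e`; these data characterize `A ⋊_r G`. -/

open scoped ComplexOrder
open Filter Topology

section
variable {A : Type*} [NormedRing A] [StarRing A] [CStarRing A]
  [NormedAlgebra ℂ A] [StarModule ℂ A] [CompleteSpace A]

/-- A state on a unital C*-algebra. -/
def IsStateU (f : A → ℂ) : Prop :=
  IsLinearMap ℂ f ∧ f 1 = 1 ∧ ∀ x, 0 ≤ f (star x * x)

/-- A pure state: an extreme point of the state space. -/
def IsPureStateU (f : A → ℂ) : Prop :=
  IsStateU f ∧ ∀ g h : A → ℂ, IsStateU g → IsStateU h →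
    (∀ x, f x = (g x + h x) / 2) → g = h

/-- Unitary equivalence of states on a unital C*-algebra: `g = u* f u`, i.e.
`g(x) = f(u x u*)` for a unitary `u`. -/
def StatesEquivU (f g : A → ℂ) : Prop :=
  ∃ u : A, u ∈ unitary A ∧ ∀ x, g x = f (u * x * star u)

variable {B : Type*} [NormedRing B] [StarRing B] [CStarRing B]
  [NormedAlgebra ℂ B] [StarModule ℂ B] [CompleteSpace B]

/-- `(B, ι, T, E)` is (a copy of) the reduced crossed product of `A` by the
action `θ` of the discrete group `G`:  `ι` is a unital embedding of `A`, the
`T g` are unitaries implementing `θ` and representing `G`, together with `ι(A)`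
they generate `B`, and `E` is a (faithful, contractive, `A`-bimodular, positive)
conditional expectation onto `A` with `E(ι(x) T_g) = 0` for `g ≠ e`. -/
structure IsReducedCrossedProduct (G : Type*) [Group G]
    (θ : G → (A ≃⋆ₐ[ℂ] A)) (ι : A →⋆ₐ[ℂ] B) (T : G → B) (E : B →ₗ[ℂ] A) : Prop where
  θ_one : ∀ x : A, θ 1 x = x
  θ_mul : ∀ (g h : G) (x : A), θ (g * h) x = θ g (θ h x)
  inj : Function.Injective ι
  unitaryT : ∀ g, T g ∈ unitary B
  T_one : T 1 = 1
  T_mul : ∀ g h, T g * T h = T (g * h)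
  covariant : ∀ (g : G) (x : A), T g * ι x * star (T g) = ι (θ g x)
  generates :
    closure (Algebra.adjoin ℂ (Set.range ι ∪ Set.range T) : Set B) = Set.univ
  E_inv : ∀ x : A, E (ι x) = x
  E_vanish : ∀ (g : G), g ≠ 1 → ∀ x : A, E (ι x * T g) = 0
  E_bimodular : ∀ (x y : A) (b : B), E (ι x * b * ι y) = x * E b * y
  E_pos : ∀ b : B, ∃ c : A, E (star b * b) = star c * c
  E_contractive : ∀ b : B, ‖E b‖ ≤ ‖b‖
  E_faithful : ∀ b : B, E (star b * b) = 0 → b = 0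

theorem stmt_3 (G : Type*) [Group G] (θ : G → (A ≃⋆ₐ[ℂ] A))
    (ι : A →⋆ₐ[ℂ] B) (T : G → B) (E : B →ₗ[ℂ] A)
    (hred : IsReducedCrossedProduct G θ ι T E)
    (f : A → ℂ) (hf : IsPureStateU f)
    (g : G) (hg : g ≠ 1) (hequiv : StatesEquivU f (fun x => f (θ g x))) :
    ¬ ∃! F : B → ℂ, IsStateU F ∧ ∀ x : A, F (ι x) = f x := by
  obtain ⟨⟨hflin, hf1e, hfpos⟩, -⟩ := hf
  obtain ⟨u, hu, hue⟩ := hequiv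
  obtain ⟨hsu, hus⟩ := Unitary.mem_iff.mp hu
  have hue' : ∀ x : A, f (θ g x) = f (u * x * star u) := fun x => hue x
  rintro ⟨F, ⟨hFstate, hFext⟩, hFuniq⟩
  set w : B := ι u * T g⁻¹ with hw
  have hf0 : f 0 = 0 := hflin.map_zero
  have hι1 : (ι 1 : B) = 1 := map_one ι
  have hE1 : E 1 = 1 := by rw [← hι1, hred.E_inv]
  have hTgg : T g * T g⁻¹ = 1 := by rw [hred.T_mul]; simp [hred.T_one]
  have hTgg' : T g⁻¹ * T g = 1 := by rw [hred.T_mul]; simp [hred.T_one]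
  have hstarTginv : star (T g⁻¹) = T g := by
    have h1 := (Unitary.mem_iff.mp (hred.unitaryT g⁻¹)).1
    calc star (T g⁻¹) = star (T g⁻¹) * (T g⁻¹ * T g) := by rw [hTgg', mul_one]
    _ = (star (T g⁻¹) * T g⁻¹) * T g := by rw [mul_assoc]
    _ = T g := by rw [h1, one_mul]
  have hsw : star w = T g * ι (star u) := by
    rw [hw, star_mul, hstarTginv, map_star]
  have hTι : ∀ (x : A), T g * ι x = ι (θ g x) * T g := by
    intro x
    have h2 := (Unitary.mem_iff.mp (hred.unitaryT g)).1
    calc T g * ι x = T g * ι x * (star (T g) * T g) := by rw [h2, mul_one]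
    _ = (T g * ι x * star (T g)) * T g := by simp only [mul_assoc]
    _ = ι (θ g x) * T g := by rw [hred.covariant]
  have e1 : ∀ x : A, E (ι x * w) = 0 := by
    intro x
    rw [hw, ← mul_assoc, ← map_mul]
    exact hred.E_vanish g⁻¹ (inv_ne_one.mpr hg) _
  have e1' : E w = 0 := by
    have := e1 1; rwa [hι1, one_mul] at this
  have hswι : ∀ x : A, star w * ι x = ι (θ g (star u * x)) * T g := by
    intro x
    rw [hsw, mul_assoc, ← map_mul, hTι]
  have e2 : ∀ x : A, E (star w * ι x) = 0 := by
    intro x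
    rw [hswι]
    exact hred.E_vanish g hg _
  have e2' : E (star w) = 0 := by
    have := e2 1; rwa [hι1, mul_one] at this
  have e3 : ∀ x : A, E (star w * ι x * w) = θ g (star u * x * u) := by
    intro x
    have key : star w * ι x * w = ι (θ g (star u * x * u)) := by
      rw [hswι, hw]
      calc ι (θ g (star u * x)) * T g * (ι u * T g⁻¹)
          = ι (θ g (star u * x)) * (T g * ι u) * T g⁻¹ := by simp only [mul_assoc]
        _ = ι (θ g (star u * x)) * (ι (θ g u) * T g) * T g⁻¹ := by rw [hTι]
        _ = ι (θ g (star u * x)) * ι (θ g u) * (T g * T g⁻¹) := by simp only [mul_assoc]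
        _ = ι (θ g (star u * x) * θ g u) := by rw [hTgg, mul_one, ← map_mul]
        _ = ι (θ g (star u * x * u)) := by rw [← map_mul]
    rw [key, hred.E_inv]
  have e3f : ∀ x : A, f (E (star w * ι x * w)) = f x := by
    intro x
    rw [e3, hue']
    have : u * (star u * x * u) * star u = x := by
      rw [show u * (star u * x * u) * star u = (u * star u) * x * (u * star u) by
        simp only [mul_assoc], hus, one_mul, mul_one]
    rw [this]
  have e5 : star w * w = 1 := by
    rw [hsw, hw]
    calc T g * ι (star u) * (ι u * T g⁻¹)
        = T g * (ι (star u) * ι u) * T g⁻¹ := by simp only [mul_assoc]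
      _ = T g * ι (star u * u) * T g⁻¹ := by rw [map_mul]
      _ = T g * T g⁻¹ := by rw [hsu, hι1, mul_one]
      _ = 1 := hTgg
  -- the canonical extension f ∘ E
  have hF1ext : (IsStateU (fun b => f (E b)) ∧ ∀ x : A, (fun b => f (E b)) (ι x) = f x) := by
    refine ⟨⟨⟨fun a b => ?_, fun c a => ?_⟩, ?_, ?_⟩, fun x => ?_⟩
    · simp only [map_add, hflin.map_add]
    · simp only [map_smul, hflin.map_smul]
    · simp only [hE1, hf1e]
    · intro b
      obtain ⟨c, hc⟩ := hred.E_pos b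
      simpa [hc] using hfpos c
    · simp only [hred.E_inv]
  -- family of extensions indexed by unimodular μ
  have keyFc : ∀ μ : ℂ, star μ * μ = 1 →
      ∃ Fμ : B → ℂ, (IsStateU Fμ ∧ ∀ x : A, Fμ (ι x) = f x) ∧
        Fμ w = (μ * f (E (w * w)) + star μ) / 2 := by
    intro μ hμ
    refine ⟨fun b => (f (E b) + μ * f (E (b * w)) + star μ * f (E (star w * b))
        + f (E (star w * b * w))) / 2, ⟨⟨⟨fun a b => ?_, fun c a => ?_⟩, ?_, ?_⟩, fun x => ?_⟩, ?_⟩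
    · simp only [map_add, hflin.map_add, add_mul, mul_add]
      ring
    · simp only [map_smul, hflin.map_smul, smul_mul_assoc, mul_smul_comm, smul_eq_mul]
      ring
    · simp only [one_mul, mul_one, hE1, hf1e, e1', e2', hf0, e5]
      norm_num
    · intro b
      set c : B := b + μ • (b * w) with hc
      have hcc : star c * c = star b * b + μ • (star b * (b * w))
          + star μ • (star w * (star b * b)) + star w * (star b * (b * w)) := by
        rw [hc]
        have hμ' : μ * star μ = 1 := by rw [mul_comm]; exact hμ
        simp only [star_add, star_smul, star_mul, add_mul, mul_add, smul_add, smul_mul_assoc,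
          mul_smul_comm, smul_smul, hμ, hμ', one_smul, mul_assoc]
        abel
      have hfc : f (E (star c * c)) = f (E (star b * b)) + μ * f (E (star b * b * w))
          + star μ * f (E (star w * (star b * b))) + f (E (star w * (star b * b) * w)) := by
        rw [hcc]
        simp only [map_add, map_smul, hflin.map_add, hflin.map_smul, smul_eq_mul, mul_assoc]
      have hpos : 0 ≤ f (E (star c * c)) := by
        obtain ⟨d, hd⟩ := hred.E_pos c
        rw [hd]; exact hfpos d
      rw [hfc] at hpos
      have h2 : (0:ℂ) ≤ 2⁻¹ := by rw [Complex.le_def]; norm_num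
      calc (0:ℂ) = 2⁻¹ * 0 := by ring
        _ ≤ 2⁻¹ * (f (E (star b * b)) + μ * f (E (star b * b * w))
            + star μ * f (E (star w * (star b * b))) + f (E (star w * (star b * b) * w))) :=
          mul_le_mul_of_nonneg_left hpos h2
        _ = _ := by ring
    · simp only [hred.E_inv, e1 x, e2 x, e3f x, hf0, mul_zero]
      ring
    · simp only [e1', hf0, e5, hE1, hf1e, one_mul]
      ring
  have hF1 := hFuniq _ hF1ext
  obtain ⟨F2, hF2, hF2w⟩ := keyFc 1 (by norm_num)
  obtain ⟨F3, hF3, hF3w⟩ := keyFc Complex.I (by simp)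
  have h2 := hFuniq F2 hF2
  have h3 := hFuniq F3 hF3
  have e0 : F w = 0 := by rw [← hF1]; simp only [e1', hf0]
  have eq2 : (1 * f (E (w * w)) + star (1:ℂ)) / 2 = 0 := by rw [← hF2w, h2, e0]
  have eq3 : (Complex.I * f (E (w * w)) + star Complex.I) / 2 = 0 := by rw [← hF3w, h3, e0]
  have : Complex.I = 0 := by
    simp only [star_one, Complex.star_def, Complex.conj_I] at eq2 eq3
    linear_combination Complex.I * eq2 - eq3
  exact Complex.I_ne_zero this

end
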